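/- The graph energy of the m-splitting graph Spl_m(G) equals √(4m+1) times the energy of G: E(Spl_m(G)) = √(4m+1)·E(G). -/

import Mathlib

open Matrix Polynomial

-- aux1: det (x•1 - c•A) for Hermitian real A
lemma aux1 {ι : Type*} [Fintype ι] [DecidableEq ι] {A : Matrix ι ι ℝ} (hA : A.IsHermitian)
    (x c : ℝ) :
    det (x • (1 : Matrix ι ι ℝ) - c • A) = ∏ i, (x - c * hA.eigenvalues i) := by
  have hU : (hA.eigenvectorUnitary : Matrix ι ι ℝ) * star (hA.eigenvectorUnitary : Matrix ι ι ℝ) = 1 :=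
    (Matrix.mem_unitaryGroup_iff).mp hA.eigenvectorUnitary.2
  set U : Matrix ι ι ℝ := (hA.eigenvectorUnitary : Matrix ι ι ℝ) with hUdef
  have key : x • (1 : Matrix ι ι ℝ) - c • A
      = U * (x • (1 : Matrix ι ι ℝ) - c • diagonal (RCLike.ofReal ∘ hA.eigenvalues)) * star U := by
    rw [Matrix.mul_sub, Matrix.sub_mul, Matrix.mul_smul, Matrix.mul_smul, Matrix.smul_mul,
      Matrix.smul_mul, Matrix.mul_one, hU]
    congr 1
    conv_lhs => rw [hA.spectral_theorem]
    rw [Unitary.conjStarAlgAut_apply]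
  have hU2 : star U * U = 1 := by
    have := Unitary.coe_star_mul_self hA.eigenvectorUnitary
    exact_mod_cast this
  rw [key, det_mul, det_mul, mul_comm, ← mul_assoc, ← det_mul, ← det_mul, hU2, Matrix.one_mul]
  have : x • (1 : Matrix ι ι ℝ) - c • diagonal (RCLike.ofReal ∘ hA.eigenvalues)
      = diagonal (fun i => x - c * hA.eigenvalues i) := by
    rw [← diagonal_one, ← diagonal_smul, ← diagonal_smul, ← diagonal_sub]
    ext i j
    by_cases h : i = j <;> simp [diagonal, h, Matrix.one_apply]
  rw [this, det_diagonal]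

lemma aux2 (n m : ℕ) (A : Matrix (Fin n) (Fin n) ℝ)
    (x : ℝ) (hx : x ≠ 0) (a b : ℝ) (h1 : a + b = 1) (h2 : a * b = -(m : ℝ)) :
    det (x • (1 : Matrix (Fin n ⊕ Fin m × Fin n) (Fin n ⊕ Fin m × Fin n) ℝ)
        - Matrix.fromBlocks A
          (Matrix.of fun i (p : Fin m × Fin n) => A i p.2)
          (Matrix.of fun (p : Fin m × Fin n) j => A p.2 j) 0) * x ^ n
      = x ^ (m * n) * (det (x • (1 : Matrix (Fin n) (Fin n) ℝ) - a • A)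
          * det (x • (1 : Matrix (Fin n) (Fin n) ℝ) - b • A)) := by
  set Q : Matrix (Fin n) (Fin m × Fin n) ℝ := Matrix.of fun i (p : Fin m × Fin n) => A i p.2
  set R : Matrix (Fin m × Fin n) (Fin n) ℝ := Matrix.of fun (p : Fin m × Fin n) j => A p.2 j
  have hblocks : x • (1 : Matrix (Fin n ⊕ Fin m × Fin n) (Fin n ⊕ Fin m × Fin n) ℝ)
      - Matrix.fromBlocks A Q R 0
      = Matrix.fromBlocks (x • (1 : Matrix (Fin n) (Fin n) ℝ) - A) (-Q) (-R)
          (x • (1 : Matrix (Fin m × Fin n) (Fin m × Fin n) ℝ)) := by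
    rw [← Matrix.fromBlocks_one, Matrix.fromBlocks_smul, sub_eq_add_neg, Matrix.fromBlocks_neg,
      Matrix.fromBlocks_add]
    simp [sub_eq_add_neg]
  have hinv : Invertible (x • (1 : Matrix (Fin m × Fin n) (Fin m × Fin n) ℝ)) :=
    ⟨x⁻¹ • 1, by simp [smul_smul, inv_mul_cancel₀ hx, mul_inv_cancel₀ hx],
      by simp [smul_smul, inv_mul_cancel₀ hx, mul_inv_cancel₀ hx]⟩
  have hinvof : ⅟(x • (1 : Matrix (Fin m × Fin n) (Fin m × Fin n) ℝ)) = x⁻¹ • 1 :=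
    invOf_eq_right_inv (by simp [smul_smul, inv_mul_cancel₀ hx, mul_inv_cancel₀ hx])
  have hQR : Q * R = (m : ℝ) • (A * A) := by
    ext i j
    simp only [Matrix.mul_apply, Matrix.smul_apply, Q, R, Matrix.of_apply, smul_eq_mul]
    rw [Fintype.sum_prod_type]
    simp [Finset.sum_const, mul_comm]
  rw [hblocks, Matrix.det_fromBlocks₂₂, hinvof]
  have hdetx : det (x • (1 : Matrix (Fin m × Fin n) (Fin m × Fin n) ℝ)) = x ^ (m * n) := by
    rw [Matrix.det_smul, det_one, mul_one]
    simp [mul_comm]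
  have hschur : (-Q) * (x⁻¹ • (1 : Matrix (Fin m × Fin n) (Fin m × Fin n) ℝ)) * (-R)
      = (x⁻¹ * m) • (A * A) := by
    simp only [Matrix.mul_smul, Matrix.mul_one, Matrix.smul_mul, Matrix.neg_mul, Matrix.mul_neg,
      neg_neg, neg_smul, smul_neg, hQR, smul_smul]
  rw [hschur, hdetx, mul_assoc]
  congr 1
  -- remains : det (x•1 - A - (x⁻¹ m)•A²) * x^n = det(x•1-a•A) * det(x•1-b•A)
  have hxn : det (x • ((x • (1 : Matrix (Fin n) (Fin n) ℝ) - A) - (x⁻¹ * m) • (A * A)))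
      = x ^ n * det ((x • (1 : Matrix (Fin n) (Fin n) ℝ) - A) - (x⁻¹ * m) • (A * A)) := by
    rw [Matrix.det_smul]; simp
  have hfac : x • ((x • (1 : Matrix (Fin n) (Fin n) ℝ) - A) - (x⁻¹ * m) • (A * A))
      = (x • (1 : Matrix (Fin n) (Fin n) ℝ) - a • A) * (x • (1 : Matrix (Fin n) (Fin n) ℝ) - b • A) := by
    have hb : b = 1 - a := by linarith
    subst hb
    simp only [Matrix.sub_mul, Matrix.mul_sub, Matrix.smul_mul, Matrix.mul_smul,
      Matrix.one_mul, Matrix.mul_one, smul_smul]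
    match_scalars
    · ring
    · ring
    · field_simp
      linear_combination -h2
  rw [← det_mul, ← hfac, hxn, mul_comm]

theorem stmt_16 (n m : ℕ) (hm : 1 ≤ m)
    (A : Matrix (Fin n) (Fin n) ℝ) (hA : A.IsHermitian)
    (B : Matrix (Fin n ⊕ Fin m × Fin n) (Fin n ⊕ Fin m × Fin n) ℝ)
    (hBdef : B = Matrix.fromBlocks A
      (Matrix.of fun i (p : Fin m × Fin n) => A i p.2)
      (Matrix.of fun (p : Fin m × Fin n) j => A p.2 j)
      0)
    (hB : B.IsHermitian) :
    ∑ p, |hB.eigenvalues p| = Real.sqrt (4 * m + 1) * ∑ i, |hA.eigenvalues i| := by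
  obtain ⟨k, rfl⟩ : ∃ k, m = k + 1 := ⟨m - 1, (Nat.succ_pred_eq_of_pos hm).symm⟩
  set s := Real.sqrt (4 * (k + 1 : ℕ) + 1) with hsdef
  have hs_nonneg : 0 ≤ s := Real.sqrt_nonneg _
  have hs_sq : s ^ 2 = 4 * (k + 1 : ℕ) + 1 := Real.sq_sqrt (by positivity)
  have hk1 : (1:ℝ) ≤ ((k + 1 : ℕ) : ℝ) := by exact_mod_cast Nat.one_le_iff_ne_zero.mpr (by omega)
  have hs1 : 1 ≤ s := by nlinarith [hs_sq, hs_nonneg]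
  set a : ℝ := (1 + s) / 2 with hadef
  set b : ℝ := (1 - s) / 2 with hbdef
  have h1 : a + b = 1 := by rw [hadef, hbdef]; ring
  have h2 : a * b = -((k + 1 : ℕ) : ℝ) := by
    rw [hadef, hbdef]
    have : (1 + s) / 2 * ((1 - s) / 2) = (1 - s ^ 2) / 4 := by ring
    rw [this, hs_sq]; ring
  set μ := hB.eigenvalues with hμdef
  set lam := hA.eigenvalues with hlamdef
  set tB : Multiset ℝ := Finset.univ.val.map μ with htBdef
  set tQ : Multiset ℝ := Multiset.replicate (k * n) (0 : ℝ)
      + Finset.univ.val.map (fun i => a * lam i) + Finset.univ.val.map (fun i => b * lam i)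
    with htQdef
  set P : Polynomial ℝ := (tB.map fun r => Polynomial.X - Polynomial.C r).prod with hPdef
  set Q : Polynomial ℝ := (tQ.map fun r => Polynomial.X - Polynomial.C r).prod with hQdef
  have evalP : ∀ x : ℝ, Polynomial.eval x P = ∏ p, (x - μ p) := by
    intro x
    rw [hPdef, htBdef, Multiset.map_map, Finset.prod_eq_multiset_prod]
    rw [Polynomial.eval_multiset_prod, Multiset.map_map]
    congr 1
    apply Multiset.map_congr rfl
    intro p _
    simp
  have evalprod : ∀ (x c : ℝ), Polynomial.eval x ((Finset.univ.val.map
      (fun i => c * lam i)).map (fun r => Polynomial.X - Polynomial.C r)).prod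
      = ∏ i, (x - c * lam i) := by
    intro x c
    rw [Multiset.map_map, Finset.prod_eq_multiset_prod, Polynomial.eval_multiset_prod,
      Multiset.map_map]
    congr 1
    apply Multiset.map_congr rfl
    intro i _
    simp
  have evalQ : ∀ x : ℝ, Polynomial.eval x Q
      = x ^ (k * n) * ((∏ i, (x - a * lam i)) * ∏ i, (x - b * lam i)) := by
    intro x
    rw [hQdef, htQdef, Multiset.map_add, Multiset.map_add, Multiset.prod_add, Multiset.prod_add,
      Multiset.map_replicate, Multiset.prod_replicate]
    rw [Polynomial.eval_mul, Polynomial.eval_mul, Polynomial.eval_pow]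
    rw [evalprod x a, evalprod x b]
    simp [mul_assoc]
  have key : P = Q := by
    apply Polynomial.eq_of_infinite_eval_eq
    apply Set.Infinite.mono (s := {(0:ℝ)}ᶜ)
    · intro x hx
      have hx : x ≠ 0 := hx
      have e1 : Polynomial.eval x P = det (x • (1 : Matrix (Fin n ⊕ Fin (k+1) × Fin n) (Fin n ⊕ Fin (k+1) × Fin n) ℝ) - B) := by
        rw [evalP]
        have := aux1 hB x 1
        simp only [one_smul, one_mul] at this
        rw [this]
      have e2 := aux2 n (k + 1) A x hx a b h1 h2
      rw [← hBdef] at e2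
      have e3 : det (x • (1 : Matrix (Fin n) (Fin n) ℝ) - a • A) = ∏ i, (x - a * lam i) :=
        aux1 hA x a
      have e4 : det (x • (1 : Matrix (Fin n) (Fin n) ℝ) - b • A) = ∏ i, (x - b * lam i) :=
        aux1 hA x b
      have hcancel : Polynomial.eval x P * x ^ n = Polynomial.eval x Q * x ^ n := by
        rw [e1, e2, e3, e4, evalQ]
        have hexp : (k + 1) * n = k * n + n := by ring
        rw [hexp, pow_add]
        ring
      exact mul_right_cancel₀ (pow_ne_zero n hx) hcancel
    · exact Set.Finite.infinite_compl (Set.finite_singleton 0)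
  have hroots : tB = tQ := by
    have rB := Polynomial.roots_multiset_prod_X_sub_C tB
    have rQ := Polynomial.roots_multiset_prod_X_sub_C tQ
    rw [← rB, ← rQ, ← hPdef, ← hQdef, key]
  -- now sum absolute values
  have hsumB : ∑ p, |μ p| = (tB.map (fun r => |r|)).sum := by
    rw [htBdef, Multiset.map_map, Finset.sum_eq_multiset_sum]
    rfl
  rw [hsumB, hroots, htQdef]
  rw [Multiset.map_add, Multiset.map_add, Multiset.sum_add, Multiset.sum_add,
    Multiset.map_replicate, Multiset.map_map, Multiset.map_map]
  have habs : |(0:ℝ)| = 0 := abs_zero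
  rw [habs, Multiset.sum_replicate, smul_zero, zero_add]
  have hsa : ((Finset.univ.val.map fun i => |a * lam i|)).sum = ∑ i, |a * lam i| := by
    rw [Finset.sum_eq_multiset_sum]
  have hsb : ((Finset.univ.val.map fun i => |b * lam i|)).sum = ∑ i, |b * lam i| := by
    rw [Finset.sum_eq_multiset_sum]
  show ((Finset.univ.val.map fun i => |a * lam i|)).sum
      + ((Finset.univ.val.map fun i => |b * lam i|)).sum = s * ∑ i, |lam i|
  rw [hsa, hsb]
  have ha_abs : |a| = a := abs_of_nonneg (by rw [hadef]; linarith)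
  have hb_abs : |b| = (s - 1) / 2 := by
    rw [hbdef, abs_of_nonpos (by linarith)]; ring
  have : ∀ i, |a * lam i| = a * |lam i| := fun i => by
    rw [abs_mul, ha_abs]
  rw [Finset.sum_congr rfl fun i _ => this i]
  have : ∀ i, |b * lam i| = (s - 1) / 2 * |lam i| := fun i => by
    rw [abs_mul, hb_abs]
  rw [Finset.sum_congr rfl fun i _ => this i]
  rw [← Finset.mul_sum, ← Finset.mul_sum, ← add_mul]
  congr 1
  rw [hadef]; ring
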